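/- Let D=(V∪R,A) be a digraph in which every vertex r∈R has in-degree 0. Then there exists a set of pairwise arc-disjoint arborescences {B_r}_{r∈R}, where each B_r is rooted at r and spans exactly the set of vertices reachable from r in D, if and only if for every X⊆V∪R with X∩V≠∅ we have d_A^-(X) ≥ |P_X^D ∩ R| − |X ∩ R|, where P_X^D denotes the set of vertices from which at least one vertex of X is reachable in D. -/

import Mathlib

open Set

/-- One step along an arc of `B` in the digraph given by tail/head maps. -/
def stepOn {α β : Type} (tl hd : β → α) (B : Set β) (u v : α) : Prop :=
  ∃ a ∈ B, tl a = u ∧ hd a = v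

/-- Reachability using only arcs of `B`. -/
def reachOn {α β : Type} (tl hd : β → α) (B : Set β) (u v : α) : Prop :=
  Relation.ReflTransGen (stepOn tl hd B) u v

/-- The vertex set of the arc set `B` together with the root `r`. -/
def vertsOf {α β : Type} (tl hd : β → α) (B : Set β) (r : α) : Set α :=
  insert r (tl '' B ∪ hd '' B)

/-- `B` is an `r`-arborescence: no arc enters the root, every other vertex of `B`
has exactly one entering arc, and every vertex of `B` is reachable from `r` in `B`. -/
noncomputable def IsArbor {α β : Type} (tl hd : β → α) (B : Set β) (r : α) : Prop :=
  (∀ a ∈ B, hd a ≠ r) ∧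
  (∀ v ∈ vertsOf tl hd B r, v ≠ r → {a ∈ B | hd a = v}.ncard = 1) ∧
  (∀ v ∈ vertsOf tl hd B r, reachOn tl hd B r v)

/-- Number of arcs entering the vertex set `X`. -/
noncomputable def dIn {α β : Type} (tl hd : β → α) (X : Set α) : ℕ :=
  {a : β | hd a ∈ X ∧ tl a ∉ X}.ncard


/-- Reachability in the whole digraph. -/
def reaches {α β : Type} (tl hd : β → α) (u v : α) : Prop :=
  reachOn tl hd Set.univ u v

/-- `P_X^D`: the set of vertices from which some vertex of `X` is reachable. -/
def Pset {α β : Type} (tl hd : β → α) (X : Set α) : Set α :=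
  {v | ∃ x ∈ X, reaches tl hd v x}

set_option linter.unusedSectionVars false
set_option linter.unusedVariables false
set_option maxHeartbeats 1000000

section Prelim

variable {α β : Type} [Fintype α] [Fintype β] {tl hd : β → α}

lemma reachOn_mono {B B' : Set β} (h : B ⊆ B') {u v : α} (hr : reachOn tl hd B u v) :
    reachOn tl hd B' u v :=
  Relation.ReflTransGen.mono (r := stepOn tl hd B) (p := stepOn tl hd B')
    (fun x y (hs : stepOn tl hd B x y) =>
      (let ⟨a, ha, h1, h2⟩ := hs; ⟨a, h ha, h1, h2⟩ : stepOn tl hd B' x y)) u v hr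

lemma reaches_trans {u v w : α} (h1 : reaches tl hd u v) (h2 : reaches tl hd v w) :
    reaches tl hd u w := Relation.ReflTransGen.trans h1 h2

lemma reaches_refl (u : α) : reaches tl hd u u := Relation.ReflTransGen.refl

lemma reaches_arc (a : β) : reaches tl hd (tl a) (hd a) :=
  Relation.ReflTransGen.single ⟨a, trivial, rfl, rfl⟩

lemma reaches_of_reachOn {B : Set β} {u v : α} (h : reachOn tl hd B u v) :
    reaches tl hd u v := reachOn_mono (Set.subset_univ B) h

/-- `reach r` is out-closed. -/
lemma reach_outclosed {r : α} (a : β) (h : reaches tl hd r (tl a)) :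
    reaches tl hd r (hd a) := reaches_trans h (reaches_arc a)

end Prelim

section EEL

variable {α β : Type} [Fintype α] [Fintype β]
variable (tl hd : β → α) (C K : Set α) (elig : β → α → Prop)

/-- internal arcs of the pool `C` entering `X`. -/
def dInt (A : Set β) (X : Set α) : Set β :=
  {a | a ∈ A ∧ tl a ∈ C ∧ hd a ∈ X ∧ tl a ∉ X}

/-- entry arcs into `X` eligible for some demand in `J`. -/
def dEnt (A : Set β) (J X : Set α) : Set β :=
  {a | a ∈ A ∧ tl a ∉ C ∧ hd a ∈ X ∧ ∃ j ∈ J, elig a j}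

/-- the cut condition for an EEL' instance. -/
def Cond (A : Set β) (T : α → Set α) : Prop :=
  ∀ X, X ⊆ C → X.Nonempty → ∀ J, J ⊆ K → (∀ j ∈ J, ∀ x ∈ X, x ∉ T j) →
    J.ncard ≤ (dInt tl hd C A X).ncard + (dEnt tl hd C elig A J X).ncard

variable {tl hd C K elig}

lemma dInt_submod (A : Set β) (X Y : Set α) :
    (dInt tl hd C A (X ∪ Y)).ncard + (dInt tl hd C A (X ∩ Y)).ncard ≤
      (dInt tl hd C A X).ncard + (dInt tl hd C A Y).ncard := by
  have h1 : dInt tl hd C A (X ∪ Y) ∪ dInt tl hd C A (X ∩ Y) ⊆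
      dInt tl hd C A X ∪ dInt tl hd C A Y := by
    rintro a (⟨hA, hC, hhd, htl⟩ | ⟨hA, hC, hhd, htl⟩)
    · rcases hhd with h | h
      · exact Or.inl ⟨hA, hC, h, fun hx => htl (Or.inl hx)⟩
      · exact Or.inr ⟨hA, hC, h, fun hx => htl (Or.inr hx)⟩
    · by_cases hx : tl a ∈ X
      · exact Or.inr ⟨hA, hC, hhd.2, fun hy => htl ⟨hx, hy⟩⟩
      · exact Or.inl ⟨hA, hC, hhd.1, hx⟩
  have h2 : dInt tl hd C A (X ∪ Y) ∩ dInt tl hd C A (X ∩ Y) ⊆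
      dInt tl hd C A X ∩ dInt tl hd C A Y := by
    rintro a ⟨⟨hA, hC, _, htl⟩, ⟨_, _, hhd, _⟩⟩
    exact ⟨⟨hA, hC, hhd.1, fun hx => htl (Or.inl hx)⟩,
           ⟨hA, hC, hhd.2, fun hy => htl (Or.inr hy)⟩⟩
  calc (dInt tl hd C A (X ∪ Y)).ncard + (dInt tl hd C A (X ∩ Y)).ncard
      = (dInt tl hd C A (X ∪ Y) ∪ dInt tl hd C A (X ∩ Y)).ncard +
        (dInt tl hd C A (X ∪ Y) ∩ dInt tl hd C A (X ∩ Y)).ncard :=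
        (Set.ncard_union_add_ncard_inter _ _ (Set.toFinite _) (Set.toFinite _)).symm
    _ ≤ (dInt tl hd C A X ∪ dInt tl hd C A Y).ncard +
        (dInt tl hd C A X ∩ dInt tl hd C A Y).ncard := by
        exact Nat.add_le_add (Set.ncard_le_ncard h1 (Set.toFinite _))
          (Set.ncard_le_ncard h2 (Set.toFinite _))
    _ = _ := Set.ncard_union_add_ncard_inter _ _ (Set.toFinite _) (Set.toFinite _)

lemma dEnt_submod (A : Set β) (X Y Jx Jy : Set α) :
    (dEnt tl hd C elig A (Jx ∩ Jy) (X ∪ Y)).ncard + (dEnt tl hd C elig A (Jx ∪ Jy) (X ∩ Y)).ncard ≤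
      (dEnt tl hd C elig A Jx X).ncard + (dEnt tl hd C elig A Jy Y).ncard := by
  have h1 : dEnt tl hd C elig A (Jx ∩ Jy) (X ∪ Y) ∪ dEnt tl hd C elig A (Jx ∪ Jy) (X ∩ Y) ⊆
      dEnt tl hd C elig A Jx X ∪ dEnt tl hd C elig A Jy Y := by
    rintro a (⟨hA, hC, hhd, j, hj, he⟩ | ⟨hA, hC, hhd, j, hj, he⟩)
    · rcases hhd with h | h
      · exact Or.inl ⟨hA, hC, h, j, hj.1, he⟩
      · exact Or.inr ⟨hA, hC, h, j, hj.2, he⟩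
    · rcases hj with hj | hj
      · exact Or.inl ⟨hA, hC, hhd.1, j, hj, he⟩
      · exact Or.inr ⟨hA, hC, hhd.2, j, hj, he⟩
  have h2 : dEnt tl hd C elig A (Jx ∩ Jy) (X ∪ Y) ∩ dEnt tl hd C elig A (Jx ∪ Jy) (X ∩ Y) ⊆
      dEnt tl hd C elig A Jx X ∩ dEnt tl hd C elig A Jy Y := by
    rintro a ⟨⟨hA, hC, _, j, hj, he⟩, ⟨_, _, hhd, _⟩⟩
    exact ⟨⟨hA, hC, hhd.1, j, hj.1, he⟩, ⟨hA, hC, hhd.2, j, hj.2, he⟩⟩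
  calc (dEnt tl hd C elig A (Jx ∩ Jy) (X ∪ Y)).ncard + (dEnt tl hd C elig A (Jx ∪ Jy) (X ∩ Y)).ncard
      = (dEnt tl hd C elig A (Jx ∩ Jy) (X ∪ Y) ∪ dEnt tl hd C elig A (Jx ∪ Jy) (X ∩ Y)).ncard +
        (dEnt tl hd C elig A (Jx ∩ Jy) (X ∪ Y) ∩ dEnt tl hd C elig A (Jx ∪ Jy) (X ∩ Y)).ncard :=
        (Set.ncard_union_add_ncard_inter _ _ (Set.toFinite _) (Set.toFinite _)).symm
    _ ≤ (dEnt tl hd C elig A Jx X ∪ dEnt tl hd C elig A Jy Y).ncard +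
        (dEnt tl hd C elig A Jx X ∩ dEnt tl hd C elig A Jy Y).ncard := by
        exact Nat.add_le_add (Set.ncard_le_ncard h1 (Set.toFinite _))
          (Set.ncard_le_ncard h2 (Set.toFinite _))
    _ = _ := Set.ncard_union_add_ncard_inter _ _ (Set.toFinite _) (Set.toFinite _)

end EEL

section Step

variable {α β : Type} [Fintype α] [Fintype β] [DecidableEq α]
variable (tl hd : β → α) (C K : Set α) (elig : β → α → Prop)

/-- feasibility of a demand-set `J` against `X`. -/
def Feas (T : α → Set α) (J X : Set α) : Prop := ∀ j ∈ J, ∀ x ∈ X, x ∉ T j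

/-- dangerous pair: tight and avoiding demand `r₀`. -/
def Dang (A : Set β) (T : α → Set α) (r₀ : α) (X J : Set α) : Prop :=
  X ⊆ C ∧ X.Nonempty ∧ J ⊆ K ∧ r₀ ∉ J ∧ Feas T J X ∧
    (dInt tl hd C A X).ncard + (dEnt tl hd C elig A J X).ncard = J.ncard

variable {tl hd C K elig}

lemma dang_uncross {A : Set β} {T : α → Set α} {r₀ : α} {X Y Jx Jy : Set α}
    (hc : Cond tl hd C K elig A T)
    (hX : Dang tl hd C K elig A T r₀ X Jx) (hY : Dang tl hd C K elig A T r₀ Y Jy)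
    (hne : (X ∩ Y).Nonempty) :
    Dang tl hd C K elig A T r₀ (X ∩ Y) (Jx ∪ Jy) ∧
      Dang tl hd C K elig A T r₀ (X ∪ Y) (Jx ∩ Jy) := by
  obtain ⟨hXC, hXne, hJxK, hr₀x, hfx, htx⟩ := hX
  obtain ⟨hYC, hYne, hJyK, hr₀y, hfy, hty⟩ := hY
  have hfi : Feas T (Jx ∪ Jy) (X ∩ Y) := by
    rintro j (hj | hj) x hx
    · exact hfx j hj x hx.1
    · exact hfy j hj x hx.2
  have hfu : Feas T (Jx ∩ Jy) (X ∪ Y) := by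
    rintro j hj x (hx | hx)
    · exact hfx j hj.1 x hx
    · exact hfy j hj.2 x hx
  have c1 := hc (X ∩ Y) (fun x hx => hXC hx.1) hne (Jx ∪ Jy) (union_subset hJxK hJyK) hfi
  have c2 := hc (X ∪ Y) (union_subset hXC hYC) (hXne.mono subset_union_left)
    (Jx ∩ Jy) (fun j hj => hJxK hj.1) hfu
  have hsubI := dInt_submod (C := C) (tl := tl) (hd := hd) A X Y
  have hsubE := dEnt_submod (C := C) (tl := tl) (hd := hd) (elig := elig) A X Y Jx Jy
  have hJcard : (Jx ∪ Jy).ncard + (Jx ∩ Jy).ncard = Jx.ncard + Jy.ncard :=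
    Set.ncard_union_add_ncard_inter _ _ (Set.toFinite _) (Set.toFinite _)
  have e1 : (dInt tl hd C A (X ∩ Y)).ncard + (dEnt tl hd C elig A (Jx ∪ Jy) (X ∩ Y)).ncard
      = (Jx ∪ Jy).ncard := by omega
  have e2 : (dInt tl hd C A (X ∪ Y)).ncard + (dEnt tl hd C elig A (Jx ∩ Jy) (X ∪ Y)).ncard
      = (Jx ∩ Jy).ncard := by omega
  refine ⟨⟨fun x hx => hXC hx.1, hne, union_subset hJxK hJyK, ?_, hfi, e1⟩,
        ⟨union_subset hXC hYC, hXne.mono subset_union_left, fun j hj => hJxK hj.1, ?_, hfu, e2⟩⟩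
  · rintro (h | h)
    exacts [hr₀x h, hr₀y h]
  · exact fun h => hr₀x h.1

lemma cond_after {A : Set β} {T : α → Set α} {r₀ : α}
    (hc : Cond tl hd C K elig A T)
    (a : β) (hhdX : hd a ∈ C) (hhdT : hd a ∉ T r₀)
    (hgood : ∀ X J, Dang tl hd C K elig A T r₀ X J → hd a ∈ X →
      ((tl a ∈ C ∧ tl a ∈ X) ∨ (tl a ∉ C ∧ ∀ j ∈ J, ¬ elig a j))) :
    Cond tl hd C K elig (A \ {a}) (fun r => if r = r₀ then insert (hd a) (T r₀) else T r) := by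
  intro X hXC hXne J hJK hfeas
  have hfeasOld : Feas T J X := by
    intro j hj x hx
    have h := hfeas j hj x hx
    intro hxT
    refine h ?_
    show x ∈ if j = r₀ then insert (hd a) (T r₀) else T j
    by_cases hjr : j = r₀
    · rw [if_pos hjr]
      exact Set.mem_insert_of_mem _ (hjr ▸ hxT)
    · rw [if_neg hjr]
      exact hxT
  have hbase := hc X hXC hXne J hJK hfeasOld
  have hr₀J : r₀ ∈ J → hd a ∉ X := by
    intro hr hmem
    have := hfeas r₀ hr (hd a) hmem
    simp at this
  have eInt : dInt tl hd C (A \ {a}) X = dInt tl hd C A X \ {a} := by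
    ext a'; simp only [dInt, Set.mem_setOf_eq, Set.mem_diff, Set.mem_singleton_iff]; tauto
  have eEnt : dEnt tl hd C elig (A \ {a}) J X = dEnt tl hd C elig A J X \ {a} := by
    ext a'; simp only [dEnt, Set.mem_setOf_eq, Set.mem_diff, Set.mem_singleton_iff]; tauto
  rw [eInt, eEnt]
  by_cases hmem : a ∈ dInt tl hd C A X ∪ dEnt tl hd C elig A J X
  · have hhX : hd a ∈ X := by
      rcases hmem with ⟨_, _, h, _⟩ | ⟨_, _, h, _⟩ <;> exact h
    have hr₀J' : r₀ ∉ J := fun h => (hr₀J h) hhX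
    by_cases htight : (dInt tl hd C A X).ncard + (dEnt tl hd C elig A J X).ncard = J.ncard
    · exfalso
      have hdang : Dang tl hd C K elig A T r₀ X J := ⟨hXC, hXne, hJK, hr₀J', hfeasOld, htight⟩
      rcases hgood X J hdang hhX with ⟨htlC, htlX⟩ | ⟨htlC, hnel⟩
      · rcases hmem with ⟨_, _, _, h4⟩ | ⟨_, h2, _, _⟩
        exacts [h4 htlX, h2 htlC]
      · rcases hmem with ⟨_, h2, _, _⟩ | ⟨_, _, _, j, hj, he⟩
        exacts [htlC h2, hnel j hj he]
    · -- slack at least one; removing a single arc is fine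
      have hslack : J.ncard + 1 ≤ (dInt tl hd C A X).ncard + (dEnt tl hd C elig A J X).ncard := by
        omega
      have d1 : (dInt tl hd C A X).ncard ≤ (dInt tl hd C A X \ {a}).ncard + 1 := by
        by_cases hm : a ∈ dInt tl hd C A X
        · rw [Set.ncard_diff_singleton_add_one hm (Set.toFinite _)]
        · rw [Set.diff_singleton_eq_self hm]; omega
      have d2 : (dEnt tl hd C elig A J X).ncard ≤ (dEnt tl hd C elig A J X \ {a}).ncard + 1 := by
        by_cases hm : a ∈ dEnt tl hd C elig A J X
        · rw [Set.ncard_diff_singleton_add_one hm (Set.toFinite _)]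
        · rw [Set.diff_singleton_eq_self hm]; omega
      -- a cannot be in both: tl a ∈ C xor tl a ∉ C
      rcases hmem with hin | hin
      · have hnotE : a ∉ dEnt tl hd C elig A J X := fun h => h.2.1 hin.2.1
        rw [Set.diff_singleton_eq_self hnotE]
        omega
      · have hnotI : a ∉ dInt tl hd C A X := fun h => hin.2.1 h.2.1
        rw [Set.diff_singleton_eq_self hnotI]
        omega
  · have h1' : a ∉ dInt tl hd C A X := fun h => hmem (Or.inl h)
    have h2' : a ∉ dEnt tl hd C elig A J X := fun h => hmem (Or.inr h)
    rw [Set.diff_singleton_eq_self h1', Set.diff_singleton_eq_self h2']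
    exact hbase

lemma step_exists {A : Set β} {T : α → Set α} {r₀ : α}
    (hc : Cond tl hd C K elig A T) (hr₀ : r₀ ∈ K) (hM : (C \ T r₀).Nonempty) :
    ∃ a ∈ A, (hd a ∈ C ∧ hd a ∉ T r₀) ∧ (tl a ∈ T r₀ ∨ (tl a ∉ C ∧ elig a r₀)) ∧
      Cond tl hd C K elig (A \ {a})
        (fun r => if r = r₀ then insert (hd a) (T r₀) else T r) := by
  classical
  set M := C \ T r₀ with hMdef
  by_cases hD : ∃ X J, Dang tl hd C K elig A T r₀ X J ∧ (X ∩ M).Nonempty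
  · -- choose X₁ of minimal cardinality, then J₂ of maximal cardinality
    set ns : Set ℕ := {n | ∃ X J, (Dang tl hd C K elig A T r₀ X J ∧ (X ∩ M).Nonempty) ∧
      X.ncard = n} with hnsdef
    have hnsne : ns.Nonempty := by
      obtain ⟨X, J, h⟩ := hD; exact ⟨X.ncard, X, J, h, rfl⟩
    obtain ⟨X₁, J₁, ⟨hdang₁, hm₁⟩, hn₁⟩ := Nat.sInf_mem hnsne
    have hminX : ∀ X J, Dang tl hd C K elig A T r₀ X J → (X ∩ M).Nonempty →
        X₁.ncard ≤ X.ncard := by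
      intro X J h1 h2
      rw [hn₁]
      exact Nat.sInf_le ⟨X, J, ⟨h1, h2⟩, rfl⟩
    set ms : Set ℕ := {m | ∃ J, Dang tl hd C K elig A T r₀ X₁ J ∧ J.ncard = m} with hmsdef
    have hmsne : ms.Nonempty := ⟨J₁.ncard, J₁, hdang₁, rfl⟩
    have hmsbdd : BddAbove ms := by
      refine ⟨K.ncard, ?_⟩
      rintro m ⟨J, hJ, rfl⟩
      exact Set.ncard_le_ncard hJ.2.2.1 (Set.toFinite _)
    obtain ⟨J₂, hdang₂, hn₂⟩ := Nat.sSup_mem hmsne hmsbdd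
    have hmaxJ : ∀ J, Dang tl hd C K elig A T r₀ X₁ J → J.ncard ≤ J₂.ncard := by
      intro J h1
      rw [hn₂]
      exact le_csSup hmsbdd ⟨J, h1, rfl⟩
    obtain ⟨hX₁C, hX₁ne, hJ₂K, hr₀J₂, hfeas₂, htight₂⟩ := hdang₂
    set X0 := X₁ ∩ M with hX0def
    have hX0ne : X0.Nonempty := hm₁
    have hX0C : X0 ⊆ C := fun x hx => hX₁C hx.1
    have hX0X₁ : X0 ⊆ X₁ := Set.inter_subset_left
    have hfeas0 : Feas T (insert r₀ J₂) X0 := by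
      rintro j (rfl | hj) x hx
      · exact hx.2.2
      · exact hfeas₂ j hj x hx.1
    have hins : (insert r₀ J₂).ncard = J₂.ncard + 1 :=
      Set.ncard_insert_of_notMem hr₀J₂ (Set.toFinite _)
    have h1 := hc X0 hX0C hX0ne (insert r₀ J₂) (Set.insert_subset hr₀ hJ₂K) hfeas0
    -- split dEnt over the inserted root
    set Bset : Set β := {a | a ∈ A ∧ tl a ∉ C ∧ hd a ∈ X0 ∧ elig a r₀ ∧
      ∀ j ∈ J₂, ¬ elig a j} with hBdef
    have hsplit : dEnt tl hd C elig A (insert r₀ J₂) X0 = dEnt tl hd C elig A J₂ X0 ∪ Bset := by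
      ext a
      simp only [dEnt, Set.mem_setOf_eq, Set.mem_union, Set.mem_insert_iff, hBdef]
      constructor
      · rintro ⟨hA, hC, hX, j, (rfl | hj), he⟩
        · by_cases hex : ∃ j ∈ J₂, elig a j
          · obtain ⟨j', hj', he'⟩ := hex
            exact Or.inl ⟨hA, hC, hX, j', hj', he'⟩
          · push_neg at hex
            exact Or.inr ⟨hA, hC, hX, he, hex⟩
        · exact Or.inl ⟨hA, hC, hX, j, hj, he⟩
      · rintro (⟨hA, hC, hX, j, hj, he⟩ | ⟨hA, hC, hX, he, _⟩)
        · exact ⟨hA, hC, hX, j, Or.inr hj, he⟩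
        · exact ⟨hA, hC, hX, r₀, Or.inl rfl, he⟩
    have hdisjB : Disjoint (dEnt tl hd C elig A J₂ X0) Bset := by
      rw [Set.disjoint_left]
      rintro a ⟨_, _, _, j, hj, he⟩ ⟨_, _, _, _, hnot⟩
      exact hnot j hj he
    have hcardsplit : (dEnt tl hd C elig A (insert r₀ J₂) X0).ncard =
        (dEnt tl hd C elig A J₂ X0).ncard + Bset.ncard := by
      rw [hsplit]
      exact Set.ncard_union_eq hdisjB (Set.toFinite _) (Set.toFinite _)
    have hmonoE : (dEnt tl hd C elig A J₂ X0).ncard ≤ (dEnt tl hd C elig A J₂ X₁).ncard := by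
      refine Set.ncard_le_ncard ?_ (Set.toFinite _)
      rintro a ⟨hA, hC, hX, hj⟩
      exact ⟨hA, hC, hX0X₁ hX, hj⟩
    set Gset : Set β := {a | a ∈ A ∧ tl a ∈ C ∧ hd a ∈ X0 ∧ tl a ∈ X₁ ∧ tl a ∉ X0} with hGdef
    have hGsub : dInt tl hd C A X0 ⊆ dInt tl hd C A X₁ ∪ Gset := by
      rintro a ⟨hA, hC, hX, htl⟩
      by_cases hx : tl a ∈ X₁
      · exact Or.inr ⟨hA, hC, hX, hx, htl⟩
      · exact Or.inl ⟨hA, hC, hX0X₁ hX, hx⟩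
    have hGcard : (dInt tl hd C A X0).ncard ≤ (dInt tl hd C A X₁).ncard + Gset.ncard :=
      le_trans (Set.ncard_le_ncard hGsub (Set.toFinite _)) (Set.ncard_union_le _ _)
    have hGB : 1 ≤ Gset.ncard + Bset.ncard := by omega
    have hkey : Gset.Nonempty ∨ Bset.Nonempty := by
      by_cases hg : Gset.ncard = 0
      · exact Or.inr (Set.nonempty_of_ncard_ne_zero (by omega))
      · exact Or.inl (Set.nonempty_of_ncard_ne_zero hg)
    rcases hkey with ⟨a, hA, htlC, hhd0, htlX₁, htlnX0⟩ | ⟨a, hA, htlC, hhd0, heli, hnel⟩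
    · -- internal candidate
      have htlT : tl a ∈ T r₀ := by
        by_contra h
        exact htlnX0 ⟨htlX₁, hX₁C htlX₁, h⟩
      refine ⟨a, hA, ⟨hX0C hhd0, hhd0.2.2⟩, Or.inl htlT, ?_⟩
      refine cond_after hc a (hX0C hhd0) hhd0.2.2 ?_
      intro X J hdang hhX
      left
      refine ⟨htlC, ?_⟩
      have hne : (X ∩ X₁).Nonempty := ⟨hd a, hhX, hX0X₁ hhd0⟩
      have hun := (dang_uncross hc hdang ⟨hX₁C, hX₁ne, hJ₂K, hr₀J₂, hfeas₂, htight₂⟩ hne).1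
      have hmeets : ((X ∩ X₁) ∩ M).Nonempty := ⟨hd a, ⟨hhX, hX0X₁ hhd0⟩, hhd0.2⟩
      have hle := hminX _ _ hun hmeets
      have heq : X ∩ X₁ = X₁ :=
        Set.eq_of_subset_of_ncard_le Set.inter_subset_right hle (Set.toFinite _)
      have hsub : X₁ ⊆ X := by rw [← heq]; exact Set.inter_subset_left
      exact hsub htlX₁
    · -- entry candidate
      refine ⟨a, hA, ⟨hX0C hhd0, hhd0.2.2⟩, Or.inr ⟨htlC, heli⟩, ?_⟩
      refine cond_after hc a (hX0C hhd0) hhd0.2.2 ?_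
      intro X J hdang hhX
      right
      refine ⟨htlC, ?_⟩
      intro j hj he
      have hne : (X ∩ X₁).Nonempty := ⟨hd a, hhX, hX0X₁ hhd0⟩
      have hun := (dang_uncross hc hdang ⟨hX₁C, hX₁ne, hJ₂K, hr₀J₂, hfeas₂, htight₂⟩ hne).1
      have hmeets : ((X ∩ X₁) ∩ M).Nonempty := ⟨hd a, ⟨hhX, hX0X₁ hhd0⟩, hhd0.2⟩
      have hle := hminX _ _ hun hmeets
      have heq : X ∩ X₁ = X₁ :=
        Set.eq_of_subset_of_ncard_le Set.inter_subset_right hle (Set.toFinite _)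
      rw [heq] at hun
      have hJle := hmaxJ _ hun
      have hJeq : J₂ = J ∪ J₂ :=
        Set.eq_of_subset_of_ncard_le Set.subset_union_right hJle (Set.toFinite _)
      have hjJ₂ : j ∈ J₂ := by rw [hJeq]; exact Or.inl hj
      exact hnel j hjJ₂ he
  · -- no dangerous set meets M: any candidate works
    have hfeas1 : Feas T {r₀} M := by
      rintro j rfl x hx
      exact hx.2
    have h1 := hc M Set.diff_subset hM {r₀} (Set.singleton_subset_iff.mpr hr₀) hfeas1
    rw [Set.ncard_singleton] at h1
    have hkey : (dInt tl hd C A M).Nonempty ∨ (dEnt tl hd C elig A {r₀} M).Nonempty := by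
      by_cases hg : (dInt tl hd C A M).ncard = 0
      · exact Or.inr (Set.nonempty_of_ncard_ne_zero (by omega))
      · exact Or.inl (Set.nonempty_of_ncard_ne_zero hg)
    have hgood : ∀ (a : β), hd a ∈ M → ∀ X J, Dang tl hd C K elig A T r₀ X J → hd a ∈ X →
        ((tl a ∈ C ∧ tl a ∈ X) ∨ (tl a ∉ C ∧ ∀ j ∈ J, ¬ elig a j)) := by
      intro a hhd X J hdang hhX
      exact absurd ⟨X, J, hdang, ⟨hd a, hhX, hhd⟩⟩ hD
    rcases hkey with ⟨a, hA, htlC, hhdM, htlM⟩ | ⟨a, hA, htlC, hhdM, j, hj, he⟩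
    · have htlT : tl a ∈ T r₀ := by
        by_contra h
        exact htlM ⟨htlC, h⟩
      exact ⟨a, hA, ⟨hhdM.1, hhdM.2⟩, Or.inl htlT,
        cond_after hc a hhdM.1 hhdM.2 (hgood a hhdM)⟩
    · rcases hj with rfl
      exact ⟨a, hA, ⟨hhdM.1, hhdM.2⟩, Or.inr ⟨htlC, he⟩,
        cond_after hc a hhdM.1 hhdM.2 (hgood a hhdM)⟩

end Step
section EELMain

variable {α β : Type} [Fintype α] [Fintype β] [DecidableEq α]
variable {tl hd : β → α} {C K : Set α} {elig : β → α → Prop}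

lemma eel_aux : ∀ (n : ℕ) (A : Set β) (T : α → Set α),
    {p : α × α | p.1 ∈ K ∧ p.2 ∈ C ∧ p.2 ∉ T p.1}.ncard = n →
    (∀ r ∈ K, T r ⊆ C) → Cond tl hd C K elig A T →
    ∃ B : α → Set β,
      (∀ r ∈ K, ∀ r' ∈ K, r ≠ r' → Disjoint (B r) (B r')) ∧
      ∀ r ∈ K,
        B r ⊆ A ∧
        (∀ a ∈ B r, hd a ∈ C ∧ hd a ∉ T r ∧ (tl a ∈ C ∨ elig a r)) ∧
        (∀ v ∈ C, v ∉ T r → {x | x ∈ B r ∧ hd x = v}.ncard = 1) ∧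
        (∀ v ∈ C, v ∉ T r → ∃ s, (s ∈ T r ∨ ∃ x ∈ B r, tl x ∉ C ∧ hd x = s) ∧
          reachOn tl hd {x | x ∈ B r ∧ tl x ∈ C} s v) := by
  intro n
  induction n with
  | zero =>
    intro A T hmeas hT _
    have hempty : {p : α × α | p.1 ∈ K ∧ p.2 ∈ C ∧ p.2 ∉ T p.1} = ∅ :=
      (Set.ncard_eq_zero (Set.toFinite _)).mp hmeas
    refine ⟨fun _ => ∅, fun r _ r' _ _ => disjoint_bot_left, fun r hr => ?_⟩
    refine ⟨Set.empty_subset _, fun a ha => absurd ha (Set.notMem_empty a), ?_, ?_⟩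
    · intro v hv hvT
      exact absurd (Set.eq_empty_iff_forall_notMem.mp hempty (r, v)) (by simp [hr, hv, hvT])
    · intro v hv hvT
      exact absurd (Set.eq_empty_iff_forall_notMem.mp hempty (r, v)) (by simp [hr, hv, hvT])
  | succ n ih =>
    intro A T hmeas hT hc
    have hne : {p : α × α | p.1 ∈ K ∧ p.2 ∈ C ∧ p.2 ∉ T p.1}.Nonempty :=
      Set.nonempty_of_ncard_ne_zero (by omega)
    obtain ⟨⟨r₀, v₀⟩, hr₀, hv₀C, hv₀T⟩ := hne
    have hM : (C \ T r₀).Nonempty := ⟨v₀, hv₀C, hv₀T⟩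
    obtain ⟨a, haA, ⟨hhdC, hhdT⟩, hcand, hc'⟩ := step_exists hc hr₀ hM
    set T' : α → Set α := fun r => if r = r₀ then insert (hd a) (T r₀) else T r with hT'def
    have hT' : ∀ r ∈ K, T' r ⊆ C := by
      intro r hr
      by_cases hrr : r = r₀
      · simp only [hT'def, if_pos hrr]
        exact Set.insert_subset hhdC (hrr ▸ hT r hr)
      · simpa only [hT'def, if_neg hrr] using hT r hr
    have hTsub : ∀ r, T r ⊆ T' r := by
      intro r x hx
      by_cases hrr : r = r₀
      · subst hrr; simp only [hT'def, if_pos rfl]; exact Set.mem_insert_of_mem _ hx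
      · simpa only [hT'def, if_neg hrr] using hx
    have hmeas' : {p : α × α | p.1 ∈ K ∧ p.2 ∈ C ∧ p.2 ∉ T' p.1} =
        {p : α × α | p.1 ∈ K ∧ p.2 ∈ C ∧ p.2 ∉ T p.1} \ {(r₀, hd a)} := by
      ext ⟨r, v⟩
      simp only [Set.mem_setOf_eq, Set.mem_diff, Set.mem_singleton_iff, Prod.mk.injEq, hT'def]
      by_cases hrr : r = r₀
      · subst hrr
        simp only [if_pos rfl, Set.mem_insert_iff, true_and]
        constructor
        · rintro ⟨h1, h2, h3⟩
          exact ⟨⟨h1, h2, fun hm => h3 (Or.inr hm)⟩, fun hm => h3 (Or.inl hm)⟩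
        · rintro ⟨⟨h1, h2, h3⟩, h4⟩
          refine ⟨h1, h2, ?_⟩
          rintro (h | h)
          exacts [h4 h, h3 h]
      · simp only [if_neg hrr]
        constructor
        · rintro ⟨h1, h2, h3⟩
          exact ⟨⟨h1, h2, h3⟩, fun hm => hrr hm.1⟩
        · rintro ⟨⟨h1, h2, h3⟩, _⟩
          exact ⟨h1, h2, h3⟩
    have hmemS : (r₀, hd a) ∈ {p : α × α | p.1 ∈ K ∧ p.2 ∈ C ∧ p.2 ∉ T p.1} := ⟨hr₀, hhdC, hhdT⟩
    have hcount : {p : α × α | p.1 ∈ K ∧ p.2 ∈ C ∧ p.2 ∉ T' p.1}.ncard = n := by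
      rw [hmeas']
      have := Set.ncard_diff_singleton_add_one hmemS (Set.toFinite _)
      omega
    obtain ⟨B', hdisj', hprop'⟩ := ih (A \ {a}) T' hcount hT' hc'
    set B : α → Set β := fun r => if r = r₀ then insert a (B' r₀) else B' r with hBdef
    have hBother : ∀ r, r ≠ r₀ → B r = B' r := fun r hr => by simp only [hBdef, if_neg hr]
    have hBr₀ : B r₀ = insert a (B' r₀) := by simp only [hBdef, if_pos rfl]
    have hB'sub : ∀ r ∈ K, B' r ⊆ A \ {a} := fun r hr => (hprop' r hr).1
    refine ⟨B, ?_, ?_⟩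
    · intro r hr r' hr' hne
      by_cases h1 : r = r₀
      · subst h1
        rw [hBr₀, hBother r' (Ne.symm hne), Set.disjoint_left]
        rintro x (rfl | hx) hx'
        · exact ((hB'sub r' hr') hx').2 rfl
        · exact Set.disjoint_left.mp (hdisj' r hr r' hr' hne) hx hx'
      · by_cases h2 : r' = r₀
        · subst h2
          rw [hBr₀, hBother r h1, Set.disjoint_right]
          rintro x (rfl | hx) hx'
          · exact ((hB'sub r hr) hx').2 rfl
          · exact Set.disjoint_right.mp (hdisj' r hr r' hr' hne) hx hx'
        · rw [hBother r h1, hBother r' h2]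
          exact hdisj' r hr r' hr' hne
    · intro r hr
      by_cases hrr : r = r₀
      · subst hrr
        obtain ⟨hsub', harcs', hdeg', hreach'⟩ := hprop' r hr
        have hTr' : T' r = insert (hd a) (T r) := by simp only [hT'def, if_pos rfl]
        constructor
        · rw [hBr₀]
          exact Set.insert_subset haA (hsub'.trans Set.diff_subset)
        constructor
        · rw [hBr₀]
          rintro x (rfl | hx)
          · refine ⟨hhdC, hhdT, ?_⟩
            rcases hcand with h | h
            · exact Or.inl (hT r hr h)
            · exact Or.inr h.2
          · obtain ⟨h1, h2, h3⟩ := harcs' x hx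
            refine ⟨h1, fun hmem => h2 ?_, h3⟩
            rw [hTr']
            exact Set.mem_insert_of_mem _ hmem
        have hclaim : ∃ s, (s ∈ T r ∨ ∃ x ∈ B r, tl x ∉ C ∧ hd x = s) ∧
            reachOn tl hd {x | x ∈ B r ∧ tl x ∈ C} s (hd a) := by
          rcases hcand with h | h
          · refine ⟨tl a, Or.inl h, Relation.ReflTransGen.single ?_⟩
            exact ⟨a, ⟨by rw [hBr₀]; exact Set.mem_insert _ _, hT r hr h⟩, rfl, rfl⟩
          · refine ⟨hd a, Or.inr ⟨a, by rw [hBr₀]; exact Set.mem_insert _ _, h.1, rfl⟩,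
              Relation.ReflTransGen.refl⟩
        have hBmono : {x | x ∈ B' r ∧ tl x ∈ C} ⊆ {x | x ∈ B r ∧ tl x ∈ C} := by
          rintro x ⟨hx, hxc⟩
          exact ⟨by rw [hBr₀]; exact Set.mem_insert_of_mem _ hx, hxc⟩
        constructor
        · intro v hv hvT
          by_cases hva : v = hd a
          · subst hva
            have heq : {x | x ∈ B r ∧ hd x = hd a} = {a} := by
              ext x
              rw [hBr₀]
              simp only [Set.mem_setOf_eq, Set.mem_insert_iff, Set.mem_singleton_iff]
              constructor
              · rintro ⟨rfl | hx, h2⟩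
                · rfl
                · exfalso
                  have := (harcs' x hx).2.1
                  rw [hTr'] at this
                  exact this (h2 ▸ Set.mem_insert _ _)
              · rintro rfl
                exact ⟨Or.inl rfl, rfl⟩
            rw [heq, Set.ncard_singleton]
          · have hvT' : v ∉ T' r := by
              rw [hTr']
              rintro (h | h)
              exacts [hva h, hvT h]
            have := hdeg' v hv hvT'
            have heq : {x | x ∈ B r ∧ hd x = v} = {x | x ∈ B' r ∧ hd x = v} := by
              ext x
              rw [hBr₀]
              simp only [Set.mem_setOf_eq, Set.mem_insert_iff]
              constructor
              · rintro ⟨rfl | hx, h2⟩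
                · exact absurd h2.symm hva
                · exact ⟨hx, h2⟩
              · rintro ⟨hx, h2⟩
                exact ⟨Or.inr hx, h2⟩
            rw [heq]
            exact this
        · intro v hv hvT
          by_cases hva : v = hd a
          · subst hva
            exact hclaim
          · have hvT' : v ∉ T' r := by
              rw [hTr']
              rintro (h | h)
              exacts [hva h, hvT h]
            obtain ⟨s, hseed, hpath⟩ := hreach' v hv hvT'
            have hpath2 : reachOn tl hd {x | x ∈ B r ∧ tl x ∈ C} s v :=
              reachOn_mono hBmono hpath
            rcases hseed with hs | ⟨x, hx, hxc, hxs⟩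
            · rw [hTr'] at hs
              rcases hs with rfl | hs
              · obtain ⟨s', hseed', hpath'⟩ := hclaim
                exact ⟨s', hseed', Relation.ReflTransGen.trans hpath' hpath2⟩
              · exact ⟨s, Or.inl hs, hpath2⟩
            · exact ⟨s, Or.inr ⟨x, by rw [hBr₀]; exact Set.mem_insert_of_mem _ hx, hxc, hxs⟩,
                hpath2⟩
      · obtain ⟨hsub', harcs', hdeg', hreach'⟩ := hprop' r hr
        have hTr' : T' r = T r := by simp only [hT'def, if_neg hrr]
        rw [hBother r hrr]
        rw [hTr'] at harcs' hdeg' hreach'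
        exact ⟨hsub'.trans Set.diff_subset, harcs', hdeg', hreach'⟩

end EELMain
section Necessity

variable {α β : Type} [Fintype α] [Fintype β] {tl hd : β → α}

lemma crossing_arc {B : Set β} {X : Set α} {u v : α}
    (h : reachOn tl hd B u v) (hu : u ∉ X) (hv : v ∈ X) :
    ∃ a ∈ B, tl a ∉ X ∧ hd a ∈ X := by
  induction h using Relation.ReflTransGen.head_induction_on with
  | refl => exact absurd hv hu
  | head hstep _ ih =>
    rename_i x y _
    obtain ⟨a, ha, hta, hha⟩ := hstep
    by_cases hy : y ∈ X
    · exact ⟨a, ha, hta ▸ hu, hha ▸ hy⟩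
    · exact ih hy

lemma necessity (V R : Set α)
    (B : α → Set β)
    (hdisj : ∀ r ∈ R, ∀ r' ∈ R, r ≠ r' → Disjoint (B r) (B r'))
    (hprops : ∀ r ∈ R, IsArbor tl hd (B r) r ∧
      vertsOf tl hd (B r) r = {v | reaches tl hd r v}) :
    ∀ X : Set α, (X ∩ V).Nonempty →
      (dIn tl hd X : ℤ) ≥ ((Pset tl hd X ∩ R).ncard : ℤ) - ((X ∩ R).ncard : ℤ) := by
  classical
  intro X _
  set S : Set α := (Pset tl hd X ∩ R) \ X with hSdef
  have hSR : S ⊆ R := fun r hr => hr.1.2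
  have hchoice : ∀ r ∈ S, ∃ a, a ∈ B r ∧ tl a ∉ X ∧ hd a ∈ X := by
    rintro r ⟨⟨hP, hR⟩, hnX⟩
    obtain ⟨x, hxX, hreach⟩ := hP
    have hx : x ∈ vertsOf tl hd (B r) r := by
      rw [(hprops r hR).2]
      exact hreach
    have hpath : reachOn tl hd (B r) r x := (hprops r hR).1.2.2 x hx
    obtain ⟨a, ha, h1, h2⟩ := crossing_arc hpath hnX hxX
    exact ⟨a, ha, h1, h2⟩
  have hsub : Pset tl hd X ∩ R ⊆ (X ∩ R) ∪ S := by
    intro r hr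
    by_cases hx : r ∈ X
    · exact Or.inl ⟨hx, hr.2⟩
    · exact Or.inr ⟨hr, hx⟩
  have hcard1 : (Pset tl hd X ∩ R).ncard ≤ (X ∩ R).ncard + S.ncard :=
    le_trans (Set.ncard_le_ncard hsub (Set.toFinite _)) (Set.ncard_union_le _ _)
  rcases Set.eq_empty_or_nonempty S with hS | ⟨rb, hrb⟩
  · rw [hS, Set.ncard_empty] at hcard1
    have : (0 : ℤ) ≤ (dIn tl hd X : ℤ) := Int.ofNat_nonneg _
    omega
  · set default : β := Classical.choose (hchoice rb hrb) with hdef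
    set f : α → β := fun r => if h : r ∈ S then Classical.choose (hchoice r h) else default
      with hfdef
    have hmaps : ∀ r ∈ S, f r ∈ {a : β | hd a ∈ X ∧ tl a ∉ X} := by
      intro r hr
      obtain ⟨h1, h2, h3⟩ := Classical.choose_spec (hchoice r hr)
      simp only [hfdef, dif_pos hr]
      exact ⟨h3, h2⟩
    have hmem : ∀ r ∈ S, f r ∈ B r := by
      intro r hr
      obtain ⟨h1, _, _⟩ := Classical.choose_spec (hchoice r hr)
      simp only [hfdef, dif_pos hr]
      exact h1
    have hinj : Set.InjOn f S := by
      intro r hr r' hr' heq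
      by_contra hne
      have h1 := hmem r hr
      have h2 := hmem r' hr'
      rw [heq] at h1
      exact Set.disjoint_left.mp (hdisj r (hSR hr) r' (hSR hr') hne) h1 h2
    have hcard2 : S.ncard ≤ dIn tl hd X :=
      Set.ncard_le_ncard_of_injOn f hmaps hinj (Set.toFinite _)
    unfold dIn at *
    omega

end Necessity
section Sufficiency

variable {α β : Type} [Fintype α] [Fintype β] {tl hd : β → α}

def Scc (tl hd : β → α) (v : α) : Set α :=
  {u | reaches tl hd u v ∧ reaches tl hd v u}

lemma mem_scc_self (v : α) : v ∈ Scc tl hd v := ⟨reaches_refl v, reaches_refl v⟩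

lemma scc_eq_of_mem {u v : α} (h : u ∈ Scc tl hd v) : Scc tl hd u = Scc tl hd v := by
  obtain ⟨h1, h2⟩ := h
  ext w
  exact ⟨fun ⟨a, b⟩ => ⟨reaches_trans a h1, reaches_trans h2 b⟩,
         fun ⟨a, b⟩ => ⟨reaches_trans a h2, reaches_trans h1 b⟩⟩

lemma scc_eq_of_inter {u v : α} (h : (Scc tl hd u ∩ Scc tl hd v).Nonempty) :
    Scc tl hd u = Scc tl hd v := by
  obtain ⟨w, hw1, hw2⟩ := h
  rw [← scc_eq_of_mem hw1, ← scc_eq_of_mem hw2]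

lemma sufficiency (V R : Set α) (hpart : V ∪ R = Set.univ) (hdisjVR : Disjoint V R)
    (hroot : ∀ a : β, hd a ∉ R)
    (hcond : ∀ X : Set α, (X ∩ V).Nonempty →
      (dIn tl hd X : ℤ) ≥ ((Pset tl hd X ∩ R).ncard : ℤ) - ((X ∩ R).ncard : ℤ)) :
    ∃ B : α → Set β,
      (∀ r ∈ R, ∀ r' ∈ R, r ≠ r' → Disjoint (B r) (B r')) ∧
      (∀ r ∈ R, IsArbor tl hd (B r) r ∧
        vertsOf tl hd (B r) r = {v | reaches tl hd r v}) := by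
  classical
  have hVmem : ∀ v : α, v ∉ R → v ∈ V := by
    intro v hv
    have h : v ∈ V ∪ R := hpart ▸ Set.mem_univ v
    rcases h with h | h
    · exact h
    · exact absurd h hv
  have hreachV : ∀ {r v : α}, reaches tl hd r v → v ≠ r → v ∉ R := by
    intro r v h hne
    rcases Relation.ReflTransGen.cases_tail h with heq | ⟨c, _, a, _, _, hha⟩
    · exact absurd heq hne
    · exact hha ▸ hroot a
  have hsccR : ∀ v : α, v ∉ R → ∀ u ∈ Scc tl hd v, u ∉ R := by
    intro v hv u hu huR
    by_cases huv : u = v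
    · exact hv (huv ▸ huR)
    · exact hreachV hu.2 huv huR
  set Pool : Set α → Prop := fun C => ∃ v, v ∉ R ∧ C = Scc tl hd v with hPooldef
  set KC : Set α → Set α := fun C => {r | r ∈ R ∧ ∃ u ∈ C, reaches tl hd r u} with hKCdef
  set elig : β → α → Prop := fun a r => reaches tl hd r (tl a) with heligdef
  have hKall : ∀ C, Pool C → ∀ r ∈ KC C, ∀ u ∈ C, reaches tl hd r u := by
    rintro C ⟨v, hvR, rfl⟩ r ⟨hrR, u₀, hu₀, hru₀⟩ u hu
    exact reaches_trans hru₀ (reaches_trans hu₀.1 hu.2)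
  have hpoolR : ∀ C, Pool C → ∀ u ∈ C, u ∉ R := by
    rintro C ⟨v, hvR, rfl⟩ u hu
    exact hsccR v hvR u hu
  -- the cut condition for each pool
  have hpoolcond : ∀ C, Pool C →
      Cond tl hd C (KC C) elig Set.univ (fun _ => (∅ : Set α)) := by
    intro C hPC X hXC hXne J hJK _
    set UJ : Set α := {u | ∃ j ∈ J, reaches tl hd j u} with hUJdef
    set W : Set α := X ∪ (Set.univ \ UJ) with hWdef
    have hXV : X ⊆ V := fun x hx => hVmem x (hpoolR C hPC x (hXC hx))
    obtain ⟨x₀, hx₀⟩ := hXne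
    have hWV : (W ∩ V).Nonempty := ⟨x₀, Or.inl hx₀, hXV hx₀⟩
    have hJR : J ⊆ R := fun j hj => (hJK hj).1
    have hJW : ∀ j ∈ J, j ∉ W := by
      intro j hj hjW
      rcases hjW with h | h
      · exact Set.disjoint_left.mp hdisjVR (hXV h) (hJR hj)
      · exact h.2 ⟨j, hj, reaches_refl j⟩
    have hJP : ∀ j ∈ J, j ∈ Pset tl hd W := by
      intro j hj
      exact ⟨x₀, Or.inl hx₀, hKall C hPC j (hJK hj) x₀ (hXC hx₀)⟩
    have hWP : W ∩ R ⊆ Pset tl hd W ∩ R := by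
      rintro w ⟨hw, hwR⟩
      exact ⟨⟨w, hw, reaches_refl w⟩, hwR⟩
    have hsub1 : (W ∩ R) ∪ J ⊆ Pset tl hd W ∩ R := by
      rintro w (hw | hw)
      · exact hWP hw
      · exact ⟨hJP w hw, hJR hw⟩
    have hdisj1 : Disjoint (W ∩ R) J := by
      rw [Set.disjoint_left]
      rintro w ⟨hwW, _⟩ hwJ
      exact hJW w hwJ hwW
    have hcard1 : (W ∩ R).ncard + J.ncard ≤ (Pset tl hd W ∩ R).ncard := by
      rw [← Set.ncard_union_eq hdisj1 (Set.toFinite _) (Set.toFinite _)]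
      exact Set.ncard_le_ncard hsub1 (Set.toFinite _)
    have hc := hcond W hWV
    have hJd : J.ncard ≤ dIn tl hd W := by omega
    have hsubW : {a : β | hd a ∈ W ∧ tl a ∉ W} ⊆
        dInt tl hd C Set.univ X ∪ dEnt tl hd C elig Set.univ J X := by
      rintro a ⟨hh, ht⟩
      have htUJ : tl a ∈ UJ ∧ tl a ∉ X := by
        constructor
        · by_contra h
          exact ht (Or.inr ⟨Set.mem_univ _, h⟩)
        · intro h
          exact ht (Or.inl h)
      have hhX : hd a ∈ X := by
        rcases hh with h | h
        · exact h
        · exfalso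
          obtain ⟨j, hj, hrt⟩ := htUJ.1
          exact h.2 ⟨j, hj, reach_outclosed a hrt⟩
      by_cases htC : tl a ∈ C
      · exact Or.inl ⟨Set.mem_univ _, htC, hhX, htUJ.2⟩
      · obtain ⟨j, hj, hrt⟩ := htUJ.1
        exact Or.inr ⟨Set.mem_univ _, htC, hhX, j, hj, hrt⟩
    calc J.ncard ≤ dIn tl hd W := hJd
      _ ≤ (dInt tl hd C Set.univ X ∪ dEnt tl hd C elig Set.univ J X).ncard :=
          Set.ncard_le_ncard hsubW (Set.toFinite _)
      _ ≤ _ := Set.ncard_union_le _ _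
  -- choose a solution for every pool
  have hsolex : ∀ C : Set α, ∃ BC : α → Set β, Pool C →
      ((∀ r ∈ KC C, ∀ r' ∈ KC C, r ≠ r' → Disjoint (BC r) (BC r')) ∧
        ∀ r ∈ KC C,
          (∀ a ∈ BC r, hd a ∈ C ∧ (tl a ∈ C ∨ elig a r)) ∧
          (∀ v ∈ C, {x | x ∈ BC r ∧ hd x = v}.ncard = 1) ∧
          (∀ v ∈ C, ∃ s, (∃ x ∈ BC r, tl x ∉ C ∧ hd x = s) ∧
            reachOn tl hd {x | x ∈ BC r ∧ tl x ∈ C} s v)) := by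
    intro C
    by_cases hPC : Pool C
    · obtain ⟨B', hdisj', hprop'⟩ := eel_aux (tl := tl) (hd := hd) (C := C) (K := KC C)
        (elig := elig) _ Set.univ (fun _ => (∅ : Set α)) rfl
        (fun r _ => Set.empty_subset _) (hpoolcond C hPC)
      refine ⟨B', fun _ => ⟨hdisj', fun r hr => ?_⟩⟩
      obtain ⟨_, harcs, hdeg, hreach⟩ := hprop' r hr
      refine ⟨fun a ha => ⟨(harcs a ha).1, (harcs a ha).2.2⟩,
        fun v hv => hdeg v hv (Set.notMem_empty v), fun v hv => ?_⟩
      obtain ⟨s, hs, hpath⟩ := hreach v hv (Set.notMem_empty v)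
      rcases hs with hs | hs
      · exact absurd hs (Set.notMem_empty s)
      · exact ⟨s, hs, hpath⟩
    · exact ⟨fun _ => ∅, fun h => absurd h hPC⟩
  choose sol hsol using hsolex
  -- the global packing
  set B : α → Set β := fun r => {a | ∃ C, Pool C ∧ r ∈ KC C ∧ a ∈ sol C r} with hBdef
  have hPoolScc : ∀ v : α, v ∉ R → Pool (Scc tl hd v) := fun v hv => ⟨v, hv, rfl⟩
  have hKmem : ∀ (v r : α), r ∈ R → reaches tl hd r v → r ∈ KC (Scc tl hd v) :=
    fun v r hrR hrv => ⟨hrR, v, mem_scc_self v, hrv⟩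
  have hpool_eq : ∀ C C', Pool C → Pool C' → (C ∩ C').Nonempty → C = C' := by
    rintro C C' ⟨v, _, rfl⟩ ⟨v', _, rfl⟩ h
    exact scc_eq_of_inter h
  -- arcs of B r lie in pools reached by r
  have hBarc : ∀ r ∈ R, ∀ a ∈ B r, reaches tl hd r (hd a) ∧
      (reaches tl hd r (tl a)) ∧ hd a ∉ R := by
    rintro r hrR a ⟨C, hPC, hrK, haC⟩
    obtain ⟨harcs, _, _⟩ := (hsol C hPC).2 r hrK
    obtain ⟨hhdC, htl⟩ := harcs a haC
    refine ⟨hKall C hPC r hrK _ hhdC, ?_, hpoolR C hPC _ hhdC⟩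
    rcases htl with h | h
    · exact hKall C hPC r hrK _ h
    · exact h
  -- in-degree of v ≠ r in B r
  have hdeg1 : ∀ r ∈ R, ∀ v, reaches tl hd r v → v ≠ r →
      {x | x ∈ B r ∧ hd x = v}.ncard = 1 := by
    intro r hrR v hrv hvr
    have hvR : v ∉ R := hreachV hrv hvr
    have heq : {x | x ∈ B r ∧ hd x = v} = {x | x ∈ sol (Scc tl hd v) r ∧ hd x = v} := by
      ext x
      simp only [Set.mem_setOf_eq]
      constructor
      · rintro ⟨⟨C, hPC, hrK, hxC⟩, hhd⟩
        obtain ⟨harcs, _, _⟩ := (hsol C hPC).2 r hrK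
        have hCeq : C = Scc tl hd v := by
          refine hpool_eq C _ hPC (hPoolScc v hvR) ⟨v, ?_, mem_scc_self v⟩
          exact hhd ▸ (harcs x hxC).1
        exact ⟨hCeq ▸ hxC, hhd⟩
      · rintro ⟨hx, hhd⟩
        exact ⟨⟨Scc tl hd v, hPoolScc v hvR, hKmem v r hrR hrv, hx⟩, hhd⟩
    rw [heq]
    obtain ⟨_, hdeg, _⟩ := (hsol _ (hPoolScc v hvR)).2 r (hKmem v r hrR hrv)
    exact hdeg v (mem_scc_self v)
  -- reachability within B r, by strong induction on the number of ancestors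
  have hreachB : ∀ n : ℕ, ∀ v : α, {u | reaches tl hd u v}.ncard = n →
      ∀ r ∈ R, reaches tl hd r v → reachOn tl hd (B r) r v := by
    intro n
    induction n using Nat.strong_induction_on with
    | _ n ih =>
      intro v hn r hrR hrv
      by_cases hvr : v = r
      · exact hvr ▸ Relation.ReflTransGen.refl
      have hvR : v ∉ R := hreachV hrv hvr
      obtain ⟨_, _, hreach⟩ := (hsol _ (hPoolScc v hvR)).2 r (hKmem v r hrR hrv)
      obtain ⟨s, ⟨x, hx, hxC, hxs⟩, hpath⟩ := hreach v (mem_scc_self v)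
      have hxB : x ∈ B r := ⟨Scc tl hd v, hPoolScc v hvR, hKmem v r hrR hrv, hx⟩
      obtain ⟨harcs, _, _⟩ := (hsol _ (hPoolScc v hvR)).2 r (hKmem v r hrR hrv)
      have hsC : hd x ∈ Scc tl hd v := (harcs x hx).1
      have hrt : reaches tl hd r (tl x) := by
        rcases (harcs x hx).2 with h | h
        · exact absurd h hxC
        · exact h
      have htv : reaches tl hd (tl x) v :=
        reaches_trans (reaches_arc x) hsC.1
      have hnvt : ¬ reaches tl hd v (tl x) := fun h => hxC ⟨htv, h⟩
      have hss : {u | reaches tl hd u (tl x)} ⊂ {u | reaches tl hd u v} := by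
        constructor
        · intro u hu
          exact reaches_trans hu htv
        · intro h
          exact hnvt (h (reaches_refl v))
      have hlt : {u | reaches tl hd u (tl x)}.ncard < n :=
        hn ▸ Set.ncard_lt_ncard hss (Set.toFinite _)
      have hIH := ih _ hlt (tl x) rfl r hrR hrt
      have hstep : reachOn tl hd (B r) r (hd x) :=
        Relation.ReflTransGen.tail hIH ⟨x, hxB, rfl, rfl⟩
      have hpath2 : reachOn tl hd (B r) (hd x) v := by
        refine reachOn_mono ?_ (hxs ▸ hpath)
        rintro y ⟨hy, _⟩
        exact ⟨Scc tl hd v, hPoolScc v hvR, hKmem v r hrR hrv, hy⟩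
      exact Relation.ReflTransGen.trans hstep hpath2
  refine ⟨B, ?_, ?_⟩
  · -- pairwise disjointness
    intro r hr r' hr' hne
    rw [Set.disjoint_left]
    rintro a ⟨C, hPC, hrK, haC⟩ ⟨C', hPC', hrK', haC'⟩
    obtain ⟨harcs, _, _⟩ := (hsol C hPC).2 r hrK
    obtain ⟨harcs', _, _⟩ := (hsol C' hPC').2 r' hrK'
    have hCeq : C = C' :=
      hpool_eq C C' hPC hPC' ⟨hd a, (harcs a haC).1, (harcs' a haC').1⟩
    subst hCeq
    exact Set.disjoint_left.mp ((hsol C hPC).1 r hrK r' hrK' hne) haC haC'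
  · intro r hrR
    have hverts : vertsOf tl hd (B r) r = {v | reaches tl hd r v} := by
      apply Set.Subset.antisymm
      · rintro v (rfl | (⟨a, ha, rfl⟩ | ⟨a, ha, rfl⟩))
        · exact reaches_refl v
        · exact (hBarc r hrR a ha).2.1
        · exact (hBarc r hrR a ha).1
      · intro v hv
        by_cases hvr : v = r
        · exact hvr ▸ Set.mem_insert _ _
        · have h1 := hdeg1 r hrR v hv hvr
          have hne : {x | x ∈ B r ∧ hd x = v}.Nonempty :=
            Set.nonempty_of_ncard_ne_zero (by omega)
          obtain ⟨x, hx, hhd⟩ := hne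
          exact Set.mem_insert_iff.mpr (Or.inr (Or.inr ⟨x, hx, hhd⟩))
    refine ⟨⟨?_, ?_, ?_⟩, hverts⟩
    · intro a ha heq
      exact (hBarc r hrR a ha).2.2 (heq ▸ hrR)
    · intro v hvmem hvr
      rw [hverts] at hvmem
      exact hdeg1 r hrR v hvmem hvr
    · intro v hvmem
      rw [hverts] at hvmem
      exact hreachB _ v rfl r hrR hvmem

end Sufficiency

/-- The Kamiyama–Katoh–Takizawa theorem on packing reachability arborescences. -/
theorem kkt_packing_reachability_arborescences
    {α β : Type} [Fintype α] [Fintype β]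
    (V R : Set α) (tl hd : β → α)
    (hpart : V ∪ R = Set.univ) (hdisj : Disjoint V R)
    (hroot : ∀ a : β, hd a ∉ R) :
    (∃ B : α → Set β,
      (∀ r ∈ R, ∀ r' ∈ R, r ≠ r' → Disjoint (B r) (B r')) ∧
      (∀ r ∈ R, IsArbor tl hd (B r) r ∧
        vertsOf tl hd (B r) r = {v | reaches tl hd r v}))
    ↔ (∀ X : Set α, (X ∩ V).Nonempty →
        (dIn tl hd X : ℤ) ≥ ((Pset tl hd X ∩ R).ncard : ℤ) - ((X ∩ R).ncard : ℤ)) := by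
  constructor
  · rintro ⟨B, h1, h2⟩
    exact necessity V R B h1 h2
  · intro h
    exact sufficiency V R hpart hdisj hroot h
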